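/- The hyperplane foliation F = {xₙ = s}_{s∈ℝ} of (ℝⁿ, g = h²δ) with h = ∏_{i=1}^{n-1}(2+cos(π xᵢ)) is totally geodesic but no leaf is isoparametric: for each s there exist two unit-speed geodesics γ_a, γ_b normal to F_s such that the mean curvature H^r of the parallel hypersurface at distance r satisfies (d/dr)|_{r=0} H^r > 0 along γ_a and (d/dr)|_{r=0} H^r < 0 along γ_b; hence for small r > 0 the parallel hypersurface of F_s at distance r does not have constant mean curvature. -/

import Mathlib

open Real Finset

/-- Partial derivative of `f` in the `i`-th coordinate direction. -/
noncomputable def pd {n : ℕ} (i : Fin n) (f : (Fin n → ℝ) → ℝ) (x : Fin n → ℝ) : ℝ :=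
  fderiv ℝ f x (Pi.single i 1)

/-- The conformal factor `h(x) = ∏_{i=1}^{n-1} (2 + cos (π xᵢ))`. -/
noncomputable def hC (n : ℕ) (x : Fin n → ℝ) : ℝ :=
  ∏ i : Fin (n - 1), (2 + Real.cos (Real.pi * x (Fin.castLE (Nat.sub_le n 1) i)))

/-- The conformally flat metric `g_{ij} = h² δ_{ij}`. -/
noncomputable def gM {n : ℕ} (h : (Fin n → ℝ) → ℝ) (x : Fin n → ℝ) (i j : Fin n) : ℝ :=
  if i = j then (h x) ^ 2 else 0

/-- Christoffel symbols `Γᵏ_{ij} = ½ Σₗ g^{kl} (∂ᵢ g_{jl} + ∂ⱼ g_{li} − ∂ₗ g_{ij})`,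
with inverse metric `g^{kl} = h⁻² δ_{kl}`. -/
noncomputable def Γconf {n : ℕ} (h : (Fin n → ℝ) → ℝ) (k i j : Fin n) (x : Fin n → ℝ) : ℝ :=
  (1 / 2) * ∑ l, (if k = l then ((h x) ^ 2)⁻¹ else 0) *
    (pd i (fun y => gM h y j l) x + pd j (fun y => gM h y l i) x - pd l (fun y => gM h y i j) x)

/-- Components of the curvature tensor: `R(∂ᵢ,∂ⱼ)∂ₖ = (Rcurv h l k i j) ∂ₗ`. -/
noncomputable def Rcurv {n : ℕ} (h : (Fin n → ℝ) → ℝ) (l k i j : Fin n) (x : Fin n → ℝ) : ℝ :=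
  pd i (fun y => Γconf h l j k y) x - pd j (fun y => Γconf h l i k y) x
    + ∑ m, Γconf h m j k x * Γconf h l i m x - ∑ m, Γconf h m i k x * Γconf h l j m x

/-- Jacobi operator components `(R̄_{∂_N})_{ij} = ⟨R̄(∂ᵢ,∂_N)∂_N, ∂ⱼ⟩`. -/
noncomputable def Jac {n : ℕ} (h : (Fin n → ℝ) → ℝ) (N i j : Fin n) (x : Fin n → ℝ) : ℝ :=
  ∑ l, gM h x l j * Rcurv h l N i N x

namespace S16


noncomputable def φf (u : ℝ) : ℝ := 2 + Real.cos (Real.pi * u)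
noncomputable def φd (u : ℝ) : ℝ := -(Real.pi * Real.sin (Real.pi * u))
noncomputable def φd2 (u : ℝ) : ℝ := -(Real.pi ^ 2 * Real.cos (Real.pi * u))

def eC (n : ℕ) (j : Fin (n - 1)) : Fin n := Fin.castLE (Nat.sub_le n 1) j

noncomputable def Pp (n : ℕ) (j : Fin (n - 1)) (x : Fin n → ℝ) : ℝ :=
  ∏ k ∈ Finset.univ.erase j, φf (x (eC n k))

noncomputable def hd (n : ℕ) (i : Fin n) (x : Fin n → ℝ) : ℝ :=
  ∑ j : Fin (n - 1), if eC n j = i then φd (x (eC n j)) * Pp n j x else 0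

noncomputable def DC (n : ℕ) (x : Fin n → ℝ) : (Fin n → ℝ) →L[ℝ] ℝ :=
  ∑ j : Fin (n - 1), Pp n j x • (φd (x (eC n j)) • ContinuousLinearMap.proj (eC n j))

lemma hasDerivAt_φf (u : ℝ) : HasDerivAt φf (φd u) u := by
  have h1 : HasDerivAt (fun v : ℝ => Real.pi * v) Real.pi u := by
    simpa using (hasDerivAt_id u).const_mul Real.pi
  have h2 := (Real.hasDerivAt_cos (Real.pi * u)).comp u h1
  have h3 := h2.const_add (2 : ℝ)
  refine h3.congr_deriv ?_
  · unfold φd; ring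
lemma hasDerivAt_φd (u : ℝ) : HasDerivAt φd (φd2 u) u := by
  have h1 : HasDerivAt (fun v : ℝ => Real.pi * v) Real.pi u := by
    simpa using (hasDerivAt_id u).const_mul Real.pi
  have h2 := ((Real.hasDerivAt_sin (Real.pi * u)).comp u h1).const_mul Real.pi
  have h3 := h2.neg
  refine h3.congr_deriv ?_
  · unfold φd2; ring

lemma hasFDerivAt_coordφ {n : ℕ} (i : Fin n) (x : Fin n → ℝ) :
    HasFDerivAt (fun y : Fin n → ℝ => φf (y i))
      (φd (x i) • (ContinuousLinearMap.proj (R := ℝ) (φ := fun _ : Fin n => ℝ) i)) x := by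
  have hp : HasFDerivAt (fun y : Fin n → ℝ => y i)
      (ContinuousLinearMap.proj (R := ℝ) (φ := fun _ : Fin n => ℝ) i) x :=
    (ContinuousLinearMap.proj (R := ℝ) (φ := fun _ : Fin n => ℝ) i).hasFDerivAt
  have := (hasDerivAt_φf (x i)).comp_hasFDerivAt x hp
  exact this

lemma hasFDerivAt_coordφd {n : ℕ} (i : Fin n) (x : Fin n → ℝ) :
    HasFDerivAt (fun y : Fin n → ℝ => φd (y i))
      (φd2 (x i) • (ContinuousLinearMap.proj (R := ℝ) (φ := fun _ : Fin n => ℝ) i)) x := by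
  have hp : HasFDerivAt (fun y : Fin n → ℝ => y i)
      (ContinuousLinearMap.proj (R := ℝ) (φ := fun _ : Fin n => ℝ) i) x :=
    (ContinuousLinearMap.proj (R := ℝ) (φ := fun _ : Fin n => ℝ) i).hasFDerivAt
  have := (hasDerivAt_φd (x i)).comp_hasFDerivAt x hp
  exact this

lemma hC_eq (n : ℕ) : hC n = fun x => ∏ j : Fin (n - 1), φf (x (eC n j)) := rfl

lemma hasFDerivAt_hC {n : ℕ} (x : Fin n → ℝ) : HasFDerivAt (hC n) (DC n x) x := by
  rw [hC_eq]
  have := HasFDerivAt.finset_prod (u := Finset.univ) (x := x)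
    (g := fun (j : Fin (n-1)) (y : Fin n → ℝ) => φf (y (eC n j)))
    (g' := fun j => φd (x (eC n j)) • ContinuousLinearMap.proj (eC n j))
    (fun j _ => hasFDerivAt_coordφ (eC n j) x)
  exact this


lemma DC_apply_single {n : ℕ} (x : Fin n → ℝ) (i : Fin n) :
    DC n x (Pi.single i 1) = hd n i x := by
  rw [DC, hd]
  rw [ContinuousLinearMap.sum_apply]
  refine Finset.sum_congr rfl fun j _ => ?_
  simp only [ContinuousLinearMap.smul_apply, ContinuousLinearMap.proj_apply, smul_eq_mul,
    Pi.single_apply]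
  by_cases h : eC n j = i <;> simp [h] <;> ring

lemma pd_hC {n : ℕ} (i : Fin n) (x : Fin n → ℝ) : pd i (hC n) x = hd n i x := by
  rw [pd, (hasFDerivAt_hC x).fderiv, DC_apply_single]

lemma hasFDerivAt_hCsq {n : ℕ} (x : Fin n → ℝ) :
    HasFDerivAt (fun y => (hC n y) ^ 2) ((2 * hC n x) • DC n x) x := by
  have := (hasDerivAt_pow 2 (hC n x)).comp_hasFDerivAt x (hasFDerivAt_hC x)
  simpa [Function.comp_def] using this

lemma pd_hCsq {n : ℕ} (i : Fin n) (x : Fin n → ℝ) :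
    pd i (fun y => (hC n y) ^ 2) x = 2 * hC n x * hd n i x := by
  rw [pd, (hasFDerivAt_hCsq x).fderiv]
  simp [DC_apply_single, mul_assoc]

lemma pd_gM {n : ℕ} (i a b : Fin n) (x : Fin n → ℝ) :
    pd i (fun y => gM (hC n) y a b) x = if a = b then 2 * hC n x * hd n i x else 0 := by
  by_cases h : a = b
  · simp only [gM, h, if_true]
    exact pd_hCsq i x
  · simp only [gM, h, if_false, pd]
    simp [fderiv_const]

lemma hC_pos {n : ℕ} (x : Fin n → ℝ) : 0 < hC n x := by
  rw [hC_eq]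
  refine Finset.prod_pos fun j _ => ?_
  have := Real.neg_one_le_cos (Real.pi * x (eC n j))
  unfold φf; linarith

lemma Γ_formula {n : ℕ} (k i j : Fin n) (x : Fin n → ℝ) :
    Γconf (hC n) k i j x = (hC n x)⁻¹ *
      ((if j = k then hd n i x else 0) + (if i = k then hd n j x else 0)
        - (if i = j then hd n k x else 0)) := by
  have hh := (hC_pos x).ne'
  rw [Γconf]
  rw [Finset.sum_eq_single k]
  · simp only [if_pos rfl]
    rw [pd_gM, pd_gM, pd_gM]
    have e2 : (if k = i then 2 * hC n x * hd n j x else 0)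
        = (if i = k then 2 * hC n x * hd n j x else 0) := by
      by_cases h : i = k
      · simp [h]
      · rw [if_neg h, if_neg (fun hk => h hk.symm)]
    rw [e2]
    split_ifs <;> field_simp <;> ring
  · intro l _ hl
    simp [Ne.symm hl]
  · intro h; exact absurd (Finset.mem_univ k) h



def Flat (n : ℕ) (x : Fin n → ℝ) : Prop :=
  ∀ j : Fin (n - 1), Real.sin (Real.pi * x (eC n j)) = 0

lemma φd_flat {n : ℕ} {x : Fin n → ℝ} (hf : Flat n x) (j : Fin (n - 1)) :
    φd (x (eC n j)) = 0 := by rw [φd, hf j, mul_zero, neg_zero]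

lemma eC_ne {n : ℕ} {N : Fin n} (hN : (N : ℕ) = n - 1) (j : Fin (n - 1)) : eC n j ≠ N := by
  intro h
  have := j.2
  have : (eC n j : ℕ) = (N : ℕ) := by rw [h]
  simp [eC, hN] at this
  omega

lemma hd_last {n : ℕ} {N : Fin n} (hN : (N : ℕ) = n - 1) (x : Fin n → ℝ) :
    hd n N x = 0 := by
  rw [hd]
  refine Finset.sum_eq_zero fun j _ => ?_
  rw [if_neg (eC_ne hN j)]

lemma hd_flat {n : ℕ} {x : Fin n → ℝ} (hf : Flat n x) (i : Fin n) : hd n i x = 0 := by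
  rw [hd]
  refine Finset.sum_eq_zero fun j _ => ?_
  rw [φd_flat hf j, zero_mul]
  split <;> rfl

lemma Γ_flat {n : ℕ} {x : Fin n → ℝ} (hf : Flat n x) (k i j : Fin n) :
    Γconf (hC n) k i j x = 0 := by
  rw [Γ_formula]
  simp [hd_flat hf]



noncomputable def PpD (n : ℕ) (j : Fin (n - 1)) (x : Fin n → ℝ) : (Fin n → ℝ) →L[ℝ] ℝ :=
  ∑ k ∈ Finset.univ.erase j, (∏ m ∈ (Finset.univ.erase j).erase k, φf (x (eC n m))) •
    (φd (x (eC n k)) • ContinuousLinearMap.proj (eC n k))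

lemma hasFDerivAt_Pp {n : ℕ} (j : Fin (n - 1)) (x : Fin n → ℝ) :
    HasFDerivAt (Pp n j) (PpD n j x) x := by
  have := HasFDerivAt.finset_prod (u := Finset.univ.erase j) (x := x)
    (g := fun (k : Fin (n-1)) (y : Fin n → ℝ) => φf (y (eC n k)))
    (g' := fun k => φd (x (eC n k)) • ContinuousLinearMap.proj (eC n k))
    (fun k _ => hasFDerivAt_coordφ (eC n k) x)
  exact this

noncomputable def hdD (n : ℕ) (i : Fin n) (x : Fin n → ℝ) : (Fin n → ℝ) →L[ℝ] ℝ :=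
  ∑ j : Fin (n - 1), if eC n j = i then
    φd (x (eC n j)) • PpD n j x +
      Pp n j x • (φd2 (x (eC n j)) • ContinuousLinearMap.proj (eC n j))
  else 0

lemma hasFDerivAt_hd {n : ℕ} (i : Fin n) (x : Fin n → ℝ) :
    HasFDerivAt (hd n i) (hdD n i x) x := by
  unfold hd hdD
  refine HasFDerivAt.fun_sum fun j _ => ?_
  by_cases h : eC n j = i
  · simp only [if_pos h]
    exact (hasFDerivAt_coordφd (eC n j) x).mul (hasFDerivAt_Pp j x)
  · simp only [if_neg h]
    exact hasFDerivAt_const 0 x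

lemma hdD_single_flat {n : ℕ} {x : Fin n → ℝ} (hf : Flat n x) (i : Fin n) :
    hdD n i x (Pi.single i 1) =
      ∑ j : Fin (n - 1), if eC n j = i then φd2 (x (eC n j)) * Pp n j x else 0 := by
  rw [hdD, ContinuousLinearMap.sum_apply]
  refine Finset.sum_congr rfl fun j _ => ?_
  by_cases h : eC n j = i
  · have h0 : φd (x i) = 0 := h ▸ φd_flat hf j
    simp [h, h0, mul_comm]
  · simp [h]

lemma Γ_iNN_eq {n : ℕ} {N : Fin n} (i : Fin n) (hi : i ≠ N) :
    (fun y => Γconf (hC n) i N N y) = fun y => -((hC n y)⁻¹ * hd n i y) := by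
  funext y
  rw [Γ_formula]
  rw [if_neg (Ne.symm hi), if_pos rfl]
  ring

lemma Γ_iiN_eq {n : ℕ} {N : Fin n} (hN : (N : ℕ) = n - 1) (i : Fin n) (hi : i ≠ N) :
    (fun y => Γconf (hC n) i i N y) = fun _ => 0 := by
  funext y
  rw [Γ_formula]
  rw [if_neg (Ne.symm hi), if_pos rfl, if_neg hi, hd_last hN]
  ring

lemma pd_zero_fun {n : ℕ} (k : Fin n) (x : Fin n → ℝ) : pd k (fun _ => (0:ℝ)) x = 0 := by
  simp [pd]

lemma pd_Γ_iNN_flat {n : ℕ} {N : Fin n} {x : Fin n → ℝ} (hf : Flat n x)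
    (i : Fin n) (hi : i ≠ N) :
    pd i (fun y => Γconf (hC n) i N N y) x =
      -((hC n x)⁻¹ * ∑ j : Fin (n - 1), if eC n j = i then φd2 (x (eC n j)) * Pp n j x else 0) := by
  rw [Γ_iNN_eq i hi]
  have hh := (hC_pos x).ne'
  have hinv : HasFDerivAt (fun y => (hC n y)⁻¹) ((-((hC n x) ^ 2)⁻¹) • DC n x) x :=
    (hasDerivAt_inv hh).comp_hasFDerivAt x (hasFDerivAt_hC x)
  have htot := ((hinv.mul (hasFDerivAt_hd i x)).neg)
  rw [pd, show (fun y => -((hC n y)⁻¹ * hd n i y)) = -((fun y => (hC n y)⁻¹) * hd n i) from rfl,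
    htot.fderiv]
  simp only [ContinuousLinearMap.neg_apply, ContinuousLinearMap.add_apply,
    ContinuousLinearMap.smul_apply, smul_eq_mul, hd_flat hf i, zero_mul, add_zero,
    hdD_single_flat hf i]

lemma Rcurv_flat {n : ℕ} {N : Fin n} {x : Fin n → ℝ} (hN : (N : ℕ) = n - 1) (hf : Flat n x)
    (i : Fin n) (hi : i ≠ N) :
    Rcurv (hC n) i N i N x =
      -((hC n x)⁻¹ * ∑ j : Fin (n - 1), if eC n j = i then φd2 (x (eC n j)) * Pp n j x else 0) := by
  rw [Rcurv]
  rw [Γ_iiN_eq hN i hi, pd_zero_fun, pd_Γ_iNN_flat hf i hi]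
  have hz : ∀ m : Fin n, Γconf (hC n) m N N x * Γconf (hC n) i i m x = 0 := fun m => by
    rw [Γ_flat hf, zero_mul]
  have hz' : ∀ m : Fin n, Γconf (hC n) m i N x * Γconf (hC n) i N m x = 0 := fun m => by
    rw [Γ_flat hf, zero_mul]
  rw [Finset.sum_congr rfl (fun m _ => hz m), Finset.sum_congr rfl (fun m _ => hz' m)]
  simp

lemma Jac_eq {n : ℕ} {N : Fin n} (x : Fin n → ℝ) (i : Fin n) :
    Jac (hC n) N i i x = (hC n x) ^ 2 * Rcurv (hC n) i N i N x := by
  rw [Jac]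
  rw [Finset.sum_eq_single i]
  · simp [gM]
  · intro l _ hl; simp [gM, hl]
  · intro h; exact absurd (Finset.mem_univ i) h

lemma ricci_flat {n : ℕ} {N : Fin n} {x : Fin n → ℝ} (hN : (N : ℕ) = n - 1) (hf : Flat n x) :
    ∑ i ∈ Finset.univ.erase N, ((hC n x) ^ 2)⁻¹ * Jac (hC n) N i i x =
      -((hC n x)⁻¹ * ∑ j : Fin (n - 1), φd2 (x (eC n j)) * Pp n j x) := by
  have hh := (hC_pos x).ne'
  have step : ∀ i ∈ Finset.univ.erase N, ((hC n x) ^ 2)⁻¹ * Jac (hC n) N i i x =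
      ∑ j : Fin (n - 1), if eC n j = i then -((hC n x)⁻¹ * (φd2 (x (eC n j)) * Pp n j x)) else 0 := by
    intro i hi
    have hiN : i ≠ N := (Finset.mem_erase.mp hi).1
    rw [Jac_eq, Rcurv_flat hN hf i hiN, ← mul_assoc,
      inv_mul_cancel₀ (pow_ne_zero 2 hh), one_mul, Finset.mul_sum, ← Finset.sum_neg_distrib]
    refine Finset.sum_congr rfl fun j _ => ?_
    by_cases h : eC n j = i <;> simp [h]
  rw [Finset.sum_congr rfl step, Finset.sum_comm]
  rw [Finset.mul_sum, ← Finset.sum_neg_distrib]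
  refine Finset.sum_congr rfl fun j _ => ?_
  rw [Finset.sum_ite_eq]
  rw [if_pos (Finset.mem_erase.mpr ⟨eC_ne hN j, Finset.mem_univ _⟩)]



lemma hC_const {n : ℕ} {x : Fin n → ℝ} {v : ℝ} (hx : ∀ j : Fin (n - 1), x (eC n j) = v) :
    hC n x = φf v ^ (n - 1) := by
  have he : hC n x = ∏ j : Fin (n - 1), φf (x (eC n j)) := rfl
  rw [he]
  rw [Finset.prod_congr rfl (fun j _ => by rw [hx j])]
  simp

lemma Pp_const {n : ℕ} {x : Fin n → ℝ} {v : ℝ} (hx : ∀ j : Fin (n - 1), x (eC n j) = v)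
    (j : Fin (n - 1)) : Pp n j x = φf v ^ (n - 2) := by
  rw [Pp]
  rw [Finset.prod_congr rfl (fun k _ => by rw [hx k])]
  rw [Finset.prod_const, Finset.card_erase_of_mem (Finset.mem_univ j)]
  congr 1
  simp
  omega

lemma flat_const {n : ℕ} {x : Fin n → ℝ} {v : ℝ} (hx : ∀ j : Fin (n - 1), x (eC n j) = v)
    (hs : Real.sin (Real.pi * v) = 0) : Flat n x := fun j => by rw [hx j]; exact hs

lemma ricci_const {n : ℕ} (hn : 2 ≤ n) {N : Fin n} (hN : (N : ℕ) = n - 1) {x : Fin n → ℝ}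
    {v : ℝ} (hx : ∀ j : Fin (n - 1), x (eC n j) = v) (hs : Real.sin (Real.pi * v) = 0) :
    ∑ i ∈ Finset.univ.erase N, ((hC n x) ^ 2)⁻¹ * Jac (hC n) N i i x =
      -((φf v ^ (n - 1))⁻¹ * (((n : ℝ) - 1) * (φd2 v * φf v ^ (n - 2)))) := by
  rw [ricci_flat hN (flat_const hx hs), hC_const hx]
  congr 1
  congr 1
  rw [Finset.sum_congr rfl (fun j _ => by rw [hx j, Pp_const hx j])]
  rw [Finset.sum_const, Finset.card_univ]
  have h1 : ((Fintype.card (Fin (n - 1)) : ℝ)) = (n : ℝ) - 1 := by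
    rw [Fintype.card_fin]
    rw [Nat.cast_sub (by omega)]
    norm_num
  rw [nsmul_eq_mul, h1]

lemma phif_zero : φf 0 = 3 := by norm_num [φf]
lemma phif_one : φf 1 = 1 := by norm_num [φf]
lemma phid2_zero : φd2 0 = -(Real.pi ^ 2) := by norm_num [φd2]
lemma phid2_one : φd2 1 = Real.pi ^ 2 := by norm_num [φd2]

lemma ricci_a {n : ℕ} (hn : 2 ≤ n) {N : Fin n} (hN : (N : ℕ) = n - 1) {x : Fin n → ℝ}
    (hx : ∀ j : Fin (n - 1), x (eC n j) = 0) :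
    ∑ i ∈ Finset.univ.erase N, ((hC n x) ^ 2)⁻¹ * Jac (hC n) N i i x =
      ((n : ℝ) - 1) / 3 * Real.pi ^ 2 := by
  rw [ricci_const hn hN hx (by simp)]
  rw [phif_zero, phid2_zero]
  have h3 : (3 : ℝ) ^ (n - 1) = 3 ^ (n - 2) * 3 := by
    rw [← pow_succ]
    congr 1
    omega
  rw [h3]
  have h32 : (3 : ℝ) ^ (n - 2) ≠ 0 := by positivity
  field_simp

lemma ricci_b {n : ℕ} (hn : 2 ≤ n) {N : Fin n} (hN : (N : ℕ) = n - 1) {x : Fin n → ℝ}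
    (hx : ∀ j : Fin (n - 1), x (eC n j) = 1) :
    ∑ i ∈ Finset.univ.erase N, ((hC n x) ^ 2)⁻¹ * Jac (hC n) N i i x =
      (1 - (n : ℝ)) * Real.pi ^ 2 := by
  rw [ricci_const hn hN hx (by simp)]
  rw [phif_one, phid2_one]
  simp
  ring



lemma deriv_line {n : ℕ} (N k : Fin n) (s c w t : ℝ) :
    deriv (fun v : ℝ => if k = N then s + c * v else w) t = if k = N then c else 0 := by
  by_cases hk : k = N
  · simp only [hk, if_true]
    have := (((hasDerivAt_id t).const_mul c).const_add s).deriv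
    simpa using this
  · simp [hk]

lemma sum_deriv_sq {n : ℕ} (N : Fin n) (s c w t : ℝ) :
    ∑ i : Fin n, (deriv (fun v : ℝ => if i = N then s + c * v else w) t) ^ 2 = c ^ 2 := by
  rw [Finset.sum_congr rfl (fun i _ => by rw [deriv_line N i s c w t])]
  have : ∀ i : Fin n, (if i = N then c else 0) ^ 2 = if i = N then c ^ 2 else 0 := by
    intro i; by_cases h : i = N <;> simp [h]
  rw [Finset.sum_congr rfl (fun i _ => this i)]
  rw [Finset.sum_ite_eq' Finset.univ N (fun _ => c ^ 2)]
  simp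

lemma geo_eq {n : ℕ} {N : Fin n} (hN : (N : ℕ) = n - 1) (s c w : ℝ)
    (hw : Real.sin (Real.pi * w) = 0) (k : Fin n) (t : ℝ) :
    deriv (fun u => deriv (fun v : ℝ => if k = N then s + c * v else w) u) t
      + ∑ i, ∑ j, Γconf (hC n) k i j (fun j' => if j' = N then s + c * t else w) *
          deriv (fun v : ℝ => if i = N then s + c * v else w) t *
          deriv (fun v : ℝ => if j = N then s + c * v else w) t = 0 := by
  have hflat : Flat n (fun j' : Fin n => if j' = N then s + c * t else w) :=
    flat_const (fun j => if_neg (eC_ne hN j)) hw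
  have h1 : (fun u => deriv (fun v : ℝ => if k = N then s + c * v else w) u)
      = fun _ => if k = N then c else 0 := funext (fun u => deriv_line N k s c w u)
  rw [h1, deriv_const]
  have h2 : ∀ i j : Fin n, Γconf (hC n) k i j (fun j' : Fin n => if j' = N then s + c * t else w) *
      deriv (fun v : ℝ => if i = N then s + c * v else w) t *
      deriv (fun v : ℝ => if j = N then s + c * v else w) t = 0 := by
    intro i j
    rw [Γ_flat hflat, zero_mul, zero_mul]
  rw [Finset.sum_congr rfl fun i _ => Finset.sum_congr rfl fun j _ => h2 i j]
  simp


end S16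

theorem stmt_16 (n : ℕ) (hn : 2 ≤ n) (s : ℝ) :
    let N : Fin n := ⟨n - 1, by omega⟩
    let a : Fin n → ℝ := fun j => if j = N then s else 0
    let b : Fin n → ℝ := fun j => if j = N then s else 1
    let γa : ℝ → Fin n → ℝ := fun t j => if j = N then s + ((3 : ℝ) ^ (n - 1))⁻¹ * t else 0
    let γb : ℝ → Fin n → ℝ := fun t j => if j = N then s + t else 1
    -- every leaf F_s is totally geodesic: the second fundamental form vanishes
    (∀ x : Fin n → ℝ, x N = s → ∀ i j : Fin n, i ≠ N → j ≠ N →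
        (hC n x) ^ 2 * Γconf (hC n) j i N x = 0) ∧
    -- γa, γb are unit-speed geodesics normal to F_s starting at a, b ∈ F_s
    γa 0 = a ∧ γb 0 = b ∧
    (∀ (γ : ℝ → Fin n → ℝ), (γ = γa ∨ γ = γb) →
      (∀ (k : Fin n) (t : ℝ),
        deriv (fun u => deriv (fun v => γ v k) u) t
          + ∑ i, ∑ j, Γconf (hC n) k i j (γ t) *
              deriv (fun v => γ v i) t * deriv (fun v => γ v j) t = 0) ∧
      (∀ t : ℝ, (hC n (γ t)) ^ 2 * ∑ i, (deriv (fun v => γ v i) t) ^ 2 = 1) ∧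
      (∀ k : Fin n, k ≠ N → deriv (fun v => γ v k) 0 = 0)) ∧
    -- the normal Ricci curvatures along γa and γb
    (∀ t : ℝ, ∑ i ∈ Finset.univ.erase N, ((hC n (γa t)) ^ 2)⁻¹ * Jac (hC n) N i i (γa t)
        = ((n : ℝ) - 1) / 3 * π ^ 2) ∧
    (∀ t : ℝ, ∑ i ∈ Finset.univ.erase N, ((hC n (γb t)) ^ 2)⁻¹ * Jac (hC n) N i i (γb t)
        = (1 - (n : ℝ)) * π ^ 2) ∧
    -- hence the mean curvatures of the parallel hypersurfaces along γa and γb,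
    -- which start at 0 and satisfy the Riccati trace equation, differ for small r > 0
    (∀ Ha Hb : ℝ → ℝ, Ha 0 = 0 → Hb 0 = 0 →
      HasDerivWithinAt Ha (((n : ℝ) - 1) / 3 * π ^ 2) (Set.Ici 0) 0 →
      HasDerivWithinAt Hb ((1 - (n : ℝ)) * π ^ 2) (Set.Ici 0) 0 →
      ∃ δ > 0, ∀ r : ℝ, 0 < r → r < δ → Ha r ≠ Hb r) := by
  intro N a b γa γb
  have hN : (N : ℕ) = n - 1 := rfl
  have hγa : γa = fun t j => if j = N then s + ((3 : ℝ) ^ (n - 1))⁻¹ * t else 0 := rfl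
  have hγb : γb = fun t j => if j = N then s + t else 1 := rfl
  have hca : ∀ (t : ℝ) (j : Fin (n - 1)), γa t (S16.eC n j) = 0 := by
    intro t j; rw [hγa]; exact if_neg (S16.eC_ne hN j)
  have hcb : ∀ (t : ℝ) (j : Fin (n - 1)), γb t (S16.eC n j) = 1 := by
    intro t j; rw [hγb]; exact if_neg (S16.eC_ne hN j)
  refine ⟨?_, ?_, ?_, ?_, ?_, ?_, ?_⟩
  · -- totally geodesic
    intro x _ i j hi hj
    rw [S16.Γ_formula, if_neg (Ne.symm hj), if_neg hi, S16.hd_last hN]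
    simp
  · have ha : a = fun j => if j = N then s else 0 := rfl
    funext j; by_cases h : j = N <;> simp [hγa, ha, h]
  · have hb : b = fun j => if j = N then s else 1 := rfl
    funext j; by_cases h : j = N <;> simp [hγb, hb, h]
  · intro γ hγ
    rcases hγ with rfl | rfl
    · refine ⟨?_, ?_, ?_⟩
      · intro k t
        simp only [hγa]
        exact S16.geo_eq hN s (((3 : ℝ) ^ (n - 1))⁻¹) 0 (by simp) k t
      · intro t
        rw [S16.hC_const (hca t), S16.phif_zero]
        simp only [hγa]
        rw [S16.sum_deriv_sq N s (((3 : ℝ) ^ (n - 1))⁻¹) 0 t]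
        have h3 : ((3 : ℝ) ^ (n - 1)) ≠ 0 := by positivity
        field_simp
      · intro k hk
        simp only [hγa]
        rw [S16.deriv_line N k s _ 0 0, if_neg hk]
    · refine ⟨?_, ?_, ?_⟩
      · intro k t
        simp only [hγb]
        have := S16.geo_eq hN s 1 1 (by simp) k t
        simpa using this
      · intro t
        rw [S16.hC_const (hcb t), S16.phif_one]
        simp only [hγb]
        have := S16.sum_deriv_sq N s 1 1 t
        rw [show ∑ i : Fin n, (deriv (fun v : ℝ => if i = N then s + v else 1) t) ^ 2
            = ∑ i : Fin n, (deriv (fun v : ℝ => if i = N then s + 1 * v else 1) t) ^ 2 by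
          refine Finset.sum_congr rfl fun i _ => ?_
          have he : (fun v : ℝ => if i = N then s + v else 1)
              = fun v : ℝ => if i = N then s + 1 * v else 1 := by funext v; rw [one_mul]
          rw [he], this]
        norm_num
      · intro k hk
        simp only [hγb]
        have := S16.deriv_line N k s 1 1 0
        rw [show (fun v : ℝ => if k = N then s + v else 1)
            = fun v : ℝ => if k = N then s + 1 * v else 1 by funext v; rw [one_mul], this,
          if_neg hk]
  · intro t
    exact S16.ricci_a hn hN (hca t)
  · intro t
    exact S16.ricci_b hn hN (hcb t)
  · intro Ha Hb ha0 hb0 hda hdb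
    have hf := hda.sub hdb
    have hn2 : (2 : ℝ) ≤ (n : ℝ) := by exact_mod_cast hn
    have hdpos : 0 < ((n : ℝ) - 1) / 3 * π ^ 2 - (1 - (n : ℝ)) * π ^ 2 := by
      have hpi2 : 0 < π ^ 2 := pow_pos Real.pi_pos 2
      nlinarith
    rw [hasDerivWithinAt_iff_tendsto_slope, Set.Ici_sdiff_left] at hf
    have hev : ∀ᶠ r in nhdsWithin 0 (Set.Ioi (0 : ℝ)),
        0 < slope (fun y => Ha y - Hb y) 0 r := hf.eventually (lt_mem_nhds hdpos)
    obtain ⟨ε, hε, hsub⟩ := Metric.mem_nhdsWithin_iff.mp hev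
    refine ⟨ε, hε, fun r hr hrε => ?_⟩
    have hmem : r ∈ Metric.ball (0 : ℝ) ε ∩ Set.Ioi 0 := by
      constructor
      · rw [Metric.mem_ball, Real.dist_eq, sub_zero, abs_of_pos hr]; exact hrε
      · exact hr
    have hs := hsub hmem
    rw [Set.mem_setOf_eq, slope_def_field, ha0, hb0] at hs
    intro heq
    rw [heq] at hs
    simp at hs
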